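/- Every finitely generated infinite-dimensional monomial algebra A over a field F admits a right point module; that is, there exists a graded right A-module M = ⊕_{i≥0} F·e_i with every homogeneous component one-dimensional and M generated by e_0. -/

import Mathlib

noncomputable section

open scoped BigOperators

/-- The free associative `F`-algebra on `m` generators, realized as the monoid
algebra of the free monoid on `Fin m`. -/
abbrev FreeAlg (F : Type) [Field F] (m : ℕ) : Type :=
  MonoidAlgebra F (FreeMonoid (Fin m))

variable (F : Type) [Field F] {m : ℕ}

/-- The element of the free algebra corresponding to a word `u`. -/
def wordElem (u : List (Fin m)) : FreeAlg F m :=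
  MonoidAlgebra.of F (FreeMonoid (Fin m)) (FreeMonoid.ofList u)

/-- The relation identifying the forbidden words in `W` with `0`. -/
def monRel (W : Set (List (Fin m))) : FreeAlg F m → FreeAlg F m → Prop :=
  fun a b => (∃ u ∈ W, a = wordElem F u) ∧ b = 0

/-- The monomial algebra `F⟨x_1,…,x_m⟩/⟨W⟩` determined by the set `W` of forbidden
words. -/
abbrev MonAlg (W : Set (List (Fin m))) : Type :=
  RingQuot (monRel F W)

/-- The canonical projection from the free algebra onto the monomial algebra. -/
def monAlgPi (W : Set (List (Fin m))) : FreeAlg F m →ₐ[F] MonAlg F W :=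
  RingQuot.mkAlgHom F (monRel F W)

/-- The image of the word `u` in the monomial algebra; `u` is a *nonzero monomial*
of the monomial algebra iff `mono F W u ≠ 0`. -/
def mono (W : Set (List (Fin m))) (u : List (Fin m)) : MonAlg F W :=
  monAlgPi F W (wordElem F u)

/-- The degree-`d` homogeneous component of the monomial algebra, spanned by the
images of the words of length `d`. -/
def homog (W : Set (List (Fin m))) (d : ℕ) : Submodule F (MonAlg F W) :=
  Submodule.span F { a | ∃ u : List (Fin m), u.length = d ∧ a = mono F W u }
/-- The right action of a single word on the graded vector space `⊕_{i≥0} F·e_i`,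
where the letter `x_j` acts by `e_i · x_j = lam i j • e_{i+1}`. -/
def ptAct (lam : ℕ → Fin m → F) : List (Fin m) → ((ℕ →₀ F) →ₗ[F] (ℕ →₀ F))
  | [] => LinearMap.id
  | j :: u => (ptAct lam u).comp (Finsupp.lsum F fun i => lam i j • Finsupp.lsingle (i + 1))

/-- The linear extension of the right action to the whole free algebra. -/
def algAct (lam : ℕ → Fin m → F) (a : FreeAlg F m) : (ℕ →₀ F) →ₗ[F] (ℕ →₀ F) :=
  Finsupp.sum a.coeff fun u c => c • ptAct F lam (FreeMonoid.toList u)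

/-- The basis vector `e_i` of the point module. -/
def eVec (i : ℕ) : ℕ →₀ F := Finsupp.single i 1

/-- The scalar data `lam` defines a (right) point module over the monomial algebra
with forbidden words `W`: the action of the free algebra descends to the quotient,
and the module is generated by `e_0`.  (The homogeneous components `F·e_i` are
one-dimensional by construction.) -/
structure IsPointModule (W : Set (List (Fin m))) (lam : ℕ → Fin m → F) : Prop where
  welldef : ∀ a : FreeAlg F m, monAlgPi F W a = 0 → algAct F lam a = 0
  cyclic : ∀ v : ℕ →₀ F, ∃ a : FreeAlg F m, algAct F lam a (eVec F 0) = v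

/-- The point module given by `lam` is faithful: the only element of the monomial
algebra annihilating it is `0`. -/
def IsFaithfulPM (W : Set (List (Fin m))) (lam : ℕ → Fin m → F) : Prop :=
  ∀ a : FreeAlg F m, algAct F lam a = 0 → monAlgPi F W a = 0

/-- The annihilator in the monomial algebra of the point module given by `lam`. -/
def annSet (W : Set (List (Fin m))) (lam : ℕ → Fin m → F) : Set (MonAlg F W) :=
  { x | ∀ a : FreeAlg F m, monAlgPi F W a = x → algAct F lam a = 0 }

/-! ### Auxiliary material -/

open Classical

/-- A word avoids `W` when no factor of it lies in `W`. -/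
def Avoids (W : Set (List (Fin m))) (u : List (Fin m)) : Prop :=
  ∀ p v s : List (Fin m), u = p ++ v ++ s → v ∉ W

lemma avoids_of_append {W : Set (List (Fin m))} {u t : List (Fin m)}
    (h : Avoids W (u ++ t)) : Avoids W u := by
  intro p v s e hv
  exact h p v (s ++ t) (by rw [e]; simp [List.append_assoc]) hv

/-- `u` admits arbitrarily long extensions avoiding `W`. -/
def ExtW (W : Set (List (Fin m))) (u : List (Fin m)) : Prop :=
  ∀ n : ℕ, ∃ t : List (Fin m), Avoids W (u ++ t) ∧ n ≤ t.length

lemma avoids_of_ext {W : Set (List (Fin m))} {u : List (Fin m)} (h : ExtW W u) :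
    Avoids W u := by
  obtain ⟨t, ht, -⟩ := h 0
  exact avoids_of_append ht

lemma ext_step {W : Set (List (Fin m))} {u : List (Fin m)} (h : ExtW W u) :
    ∃ j : Fin m, ExtW W (u ++ [j]) := by
  by_contra hc
  push_neg at hc
  have hc' : ∀ j : Fin m, ∃ n : ℕ, ∀ t, Avoids W (u ++ [j] ++ t) → t.length < n := by
    intro j
    have := hc j
    unfold ExtW at this
    push_neg at this
    obtain ⟨n, hn⟩ := this
    exact ⟨n, fun t ht => hn t ht⟩
  choose nb hnb using hc'
  obtain ⟨t, ht, hlen⟩ := h ((Finset.univ.sup nb) + 1)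
  match t, hlen with
  | j :: t', hlen =>
    have h1 : Avoids W (u ++ [j] ++ t') := by simpa [List.append_assoc] using ht
    have h2 := hnb j t' h1
    have h3 : nb j ≤ Finset.univ.sup nb := Finset.le_sup (Finset.mem_univ j)
    simp only [List.length_cons] at hlen
    omega

variable {F}

section Chain

variable (W : Set (List (Fin m))) (h0 : ExtW W ([] : List (Fin m)))

/-- The chain of prefixes of the infinite word avoiding `W`. -/
noncomputable def chain : ℕ → {u : List (Fin m) // ExtW W u}
  | 0 => ⟨[], h0⟩
  | n + 1 =>
    ⟨(chain n).1 ++ [(ext_step (chain n).2).choose], (ext_step (chain n).2).choose_spec⟩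

/-- The infinite word avoiding `W`. -/
noncomputable def wSeq (n : ℕ) : Fin m := (ext_step (chain W h0 n).2).choose

lemma chain_succ (n : ℕ) :
    (chain W h0 (n + 1)).1 = (chain W h0 n).1 ++ [wSeq W h0 n] := rfl

lemma chain_length (n : ℕ) : (chain W h0 n).1.length = n := by
  induction n with
  | zero => rfl
  | succ n ih => rw [chain_succ]; simp [ih]

end Chain

/-- `u` occurs in `w` starting at position `i`. -/
def Agrees (w : ℕ → Fin m) : ℕ → List (Fin m) → Prop
  | _, [] => True
  | i, j :: u => w i = j ∧ Agrees w (i + 1) u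

lemma agrees_append (w : ℕ → Fin m) (u v : List (Fin m)) (i : ℕ) :
    Agrees w i (u ++ v) ↔ Agrees w i u ∧ Agrees w (i + u.length) v := by
  induction u generalizing i with
  | nil => simp [Agrees]
  | cons j u ih =>
    show (w i = j ∧ Agrees w (i + 1) (u ++ v)) ↔ (w i = j ∧ Agrees w (i + 1) u) ∧ _
    rw [ih (i + 1), and_assoc]
    have he : i + 1 + u.length = i + (j :: u).length := by simp; omega
    rw [he]

lemma chain_of_agrees (W : Set (List (Fin m))) (h0 : ExtW W ([] : List (Fin m)))
    {i : ℕ} {u : List (Fin m)} (h : Agrees (wSeq W h0) i u) :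
    (chain W h0 (i + u.length)).1 = (chain W h0 i).1 ++ u := by
  induction u generalizing i with
  | nil => simp
  | cons j u ih =>
    obtain ⟨h1, h2⟩ := h
    have := ih h2
    have e : i + (j :: u).length = (i + 1) + u.length := by simp; omega
    rw [e, this, chain_succ, h1]
    simp

lemma not_agrees_of_mem (W : Set (List (Fin m))) (h0 : ExtW W ([] : List (Fin m)))
    {u : List (Fin m)} (hu : u ∈ W) (i : ℕ) : ¬ Agrees (wSeq W h0) i u := by
  intro ha
  have h1 := chain_of_agrees W h0 ha
  have h2 : Avoids W (chain W h0 (i + u.length)).1 := avoids_of_ext (chain W h0 _).2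
  exact h2 (chain W h0 i).1 u [] (by rw [h1]; simp) hu

lemma agrees_chain (W : Set (List (Fin m))) (h0 : ExtW W ([] : List (Fin m))) (n : ℕ) :
    Agrees (wSeq W h0) 0 (chain W h0 n).1 := by
  induction n with
  | zero => trivial
  | succ n ih =>
    rw [chain_succ, agrees_append]
    refine ⟨ih, ?_⟩
    rw [chain_length]
    exact ⟨by rw [Nat.zero_add], trivial⟩

variable (F)

/-- The action of a single letter. -/
def letterL (lam : ℕ → Fin m → F) (j : Fin m) : (ℕ →₀ F) →ₗ[F] (ℕ →₀ F) :=
  Finsupp.lsum F fun i => lam i j • Finsupp.lsingle (i + 1)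

lemma ptAct_cons (lam : ℕ → Fin m → F) (j : Fin m) (u : List (Fin m)) :
    ptAct F lam (j :: u) = (ptAct F lam u).comp (letterL F lam j) := rfl

lemma letterL_single (lam : ℕ → Fin m → F) (j : Fin m) (i : ℕ) (c : F) :
    letterL F lam j (Finsupp.single i c) = lam i j • Finsupp.single (i + 1) c := by
  rw [letterL, Finsupp.lsum_single (S := F), LinearMap.smul_apply, Finsupp.lsingle_apply]

/-- The `0/1` coefficients determined by an infinite word. -/
def lamOf (w : ℕ → Fin m) (i : ℕ) (j : Fin m) : F := if w i = j then 1 else 0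

lemma ptAct_single (w : ℕ → Fin m) (u : List (Fin m)) (i : ℕ) (c : F) :
    ptAct F (lamOf F w) u (Finsupp.single i c) =
      if Agrees w i u then Finsupp.single (i + u.length) c else 0 := by
  induction u generalizing i with
  | nil => simp [ptAct, Agrees]
  | cons j u ih =>
    rw [ptAct_cons, LinearMap.comp_apply, letterL_single]
    by_cases hw : w i = j
    · rw [show lamOf F w i j = 1 from if_pos hw, one_smul, ih]
      have : Agrees w i (j :: u) ↔ Agrees w (i + 1) u := by
        simp [Agrees, hw]
      by_cases hA : Agrees w (i + 1) u
      · rw [if_pos hA, if_pos (this.mpr hA)]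
        congr 1
        simp; omega
      · rw [if_neg hA, if_neg (fun h => hA (this.mp h))]
    · rw [show lamOf F w i j = 0 from if_neg hw, zero_smul, map_zero]
      have : ¬ Agrees w i (j :: u) := fun h => hw h.1
      rw [if_neg this]

lemma ptAct_eq_zero (W : Set (List (Fin m))) (h0 : ExtW W ([] : List (Fin m)))
    {u : List (Fin m)} (hu : u ∈ W) :
    ptAct F (lamOf F (wSeq W h0)) u = 0 := by
  apply Finsupp.lhom_ext
  intro i c
  rw [ptAct_single, if_neg (not_agrees_of_mem W h0 hu i)]
  rfl

/-- The action as an algebra homomorphism to the opposite endomorphism algebra. -/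
def actHom (lam : ℕ → Fin m → F) : FreeAlg F m →ₐ[F] (Module.End F (ℕ →₀ F))ᵐᵒᵖ :=
  MonoidAlgebra.lift F _ (FreeMonoid (Fin m))
    (FreeMonoid.lift fun j =>
      MulOpposite.op ((Finsupp.lsum F fun i => lam i j • Finsupp.lsingle (i + 1) :
        (ℕ →₀ F) →ₗ[F] (ℕ →₀ F)) : Module.End F (ℕ →₀ F)))

lemma lift_unop (lam : ℕ → Fin m → F) (l : List (Fin m)) :
    ((FreeMonoid.lift fun j =>
      MulOpposite.op ((Finsupp.lsum F fun i => lam i j • Finsupp.lsingle (i + 1) :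
        (ℕ →₀ F) →ₗ[F] (ℕ →₀ F)) : Module.End F (ℕ →₀ F))) (FreeMonoid.ofList l)).unop
      = ptAct F lam l := by
  induction l with
  | nil => rfl
  | cons j l ih =>
    rw [FreeMonoid.ofList_cons, map_mul, MulOpposite.unop_mul, FreeMonoid.lift_eval_of,
      MulOpposite.unop_op, ih]
    rfl

lemma algAct_eq (lam : ℕ → Fin m → F) (a : FreeAlg F m) :
    algAct F lam a = (actHom F lam a).unop := by
  rw [actHom, MonoidAlgebra.lift_apply]
  rw [algAct, Finsupp.sum, Finsupp.sum, Finset.unop_sum]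
  refine Finset.sum_congr rfl fun u _ => ?_
  rw [MulOpposite.unop_smul, ← lift_unop F lam (FreeMonoid.toList u), FreeMonoid.ofList_toList]

lemma algAct_wordElem (lam : ℕ → Fin m → F) (u : List (Fin m)) :
    algAct F lam (wordElem F u) = ptAct F lam u := by
  rw [algAct_eq, actHom, wordElem, MonoidAlgebra.lift_of, lift_unop]

lemma wordElem_append (u v : List (Fin m)) :
    wordElem F (u ++ v) = wordElem F u * wordElem F v := by
  rw [wordElem, wordElem, wordElem, FreeMonoid.ofList_append, map_mul]

lemma mono_eq_zero (W : Set (List (Fin m))) {v : List (Fin m)} (hv : v ∈ W) :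
    monAlgPi F W (wordElem F v) = 0 := by
  have h := RingQuot.mkAlgHom_rel F (s := monRel F W) ⟨⟨v, hv, rfl⟩, rfl⟩
  simpa [monAlgPi] using h

/-- If all words of length `N` fail to avoid `W`, the monomial algebra is
finite-dimensional. -/
lemma finite_of_bound (W : Set (List (Fin m))) (N : ℕ)
    (hN : ∀ u : List (Fin m), u.length = N → ¬ Avoids W u) :
    Module.Finite F (MonAlg F W) := by
  have hzero : ∀ u : List (Fin m), N ≤ u.length → mono F W u = 0 := by
    intro u hu
    have htake : (u.take N).length = N := by simp [hu]
    have hnav := hN (u.take N) htake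
    unfold Avoids at hnav
    push_neg at hnav
    obtain ⟨p, v, s, he, hv⟩ := hnav
    have : u = p ++ v ++ (s ++ u.drop N) := by
      conv_lhs => rw [← List.take_append_drop N u]
      rw [he]; simp [List.append_assoc]
    rw [mono, this, wordElem_append, wordElem_append, map_mul, map_mul,
      mono_eq_zero F W hv, mul_zero, zero_mul]
  have hspan : Submodule.span F (mono F W '' {u : List (Fin m) | u.length < N}) = ⊤ := by
    rw [eq_top_iff]
    rintro x -
    obtain ⟨a, rfl⟩ := RingQuot.mkAlgHom_surjective F (monRel F W) x
    induction a using MonoidAlgebra.induction_linear with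
    | zero => rw [map_zero]; exact Submodule.zero_mem _
    | add f g hf hg => rw [map_add]; exact Submodule.add_mem _ hf hg
    | single u c =>
      have hw : (MonoidAlgebra.single u c : FreeAlg F m) = c • wordElem F u.toList := by
        rw [wordElem, FreeMonoid.ofList_toList, MonoidAlgebra.of_apply,
          MonoidAlgebra.smul_single', mul_one]
      rw [hw, map_smul]
      by_cases hl : u.toList.length < N
      · exact Submodule.smul_mem _ _ (Submodule.subset_span ⟨u.toList, hl, rfl⟩)
      · have : mono F W u.toList = 0 := hzero _ (not_lt.mp hl)
        rw [mono] at this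
        show c • RingQuot.mkAlgHom F (monRel F W) (wordElem F u.toList) ∈ _
        rw [show RingQuot.mkAlgHom F (monRel F W) = monAlgPi F W from rfl, this, smul_zero]
        exact Submodule.zero_mem _
  refine ⟨Submodule.fg_def.mpr ⟨_, Set.Finite.image _ (List.finite_length_lt (Fin m) N), hspan⟩⟩

/-- Every finitely generated infinite-dimensional monomial algebra
admits a right point module. -/
theorem statement4 (F : Type) [Field F] (m : ℕ) (W : Set (List (Fin m)))
    (hinf : ¬ Module.Finite F (MonAlg F W)) :
    ∃ lam : ℕ → Fin m → F, IsPointModule F W lam := by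
  have hlong : ∀ N : ℕ, ∃ u : List (Fin m), u.length = N ∧ Avoids W u := by
    by_contra hc
    push_neg at hc
    obtain ⟨N, hN⟩ := hc
    exact hinf (finite_of_bound F W N hN)
  have h0 : ExtW W ([] : List (Fin m)) := by
    intro n
    obtain ⟨u, hl, ha⟩ := hlong n
    exact ⟨u, by simpa using ha, hl.ge⟩
  set w := wSeq W h0 with hw
  refine ⟨lamOf F w, ?_, ?_⟩
  · -- welldef
    have hrel : ∀ ⦃a b : FreeAlg F m⦄, monRel F W a b →
        actHom F (lamOf F w) a = actHom F (lamOf F w) b := by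
      rintro a b ⟨⟨u, hu, rfl⟩, rfl⟩
      rw [map_zero]
      have : (actHom F (lamOf F w) (wordElem F u)).unop = 0 := by
        rw [← algAct_eq, algAct_wordElem]
        exact ptAct_eq_zero F W h0 hu
      exact MulOpposite.unop_injective (by rw [this]; rfl)
    intro a ha
    have := RingQuot.liftAlgHom_mkAlgHom_apply F (actHom F (lamOf F w)) hrel a
    rw [show RingQuot.mkAlgHom F (monRel F W) a = monAlgPi F W a from rfl, ha, map_zero] at this
    rw [algAct_eq, ← this]
    rfl
  · -- cyclic
    intro v
    induction v using Finsupp.induction with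
    | zero => exact ⟨0, by simp [algAct, Finsupp.sum_zero_index]⟩
    | single_add i b f _ _ ih =>
      obtain ⟨a2, ha2⟩ := ih
      refine ⟨b • wordElem F (chain W h0 i).1 + a2, ?_⟩
      have hadd : ∀ x y : FreeAlg F m, algAct F (lamOf F w) (x + y)
          = algAct F (lamOf F w) x + algAct F (lamOf F w) y := by
        intro x y
        rw [algAct_eq, algAct_eq, algAct_eq, map_add]; rfl
      have hsmul : algAct F (lamOf F w) (b • wordElem F (chain W h0 i).1)
          = b • ptAct F (lamOf F w) (chain W h0 i).1 := by
        rw [algAct_eq, map_smul, MulOpposite.unop_smul, ← algAct_eq, algAct_wordElem]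
      rw [hadd, LinearMap.add_apply, hsmul, ha2]
      have : ptAct F (lamOf F w) (chain W h0 i).1 (eVec F 0) = Finsupp.single i 1 := by
        rw [eVec, ptAct_single, if_pos (agrees_chain W h0 i), chain_length, zero_add]
      rw [LinearMap.smul_apply, this]
      congr 1
      rw [Finsupp.smul_single, smul_eq_mul, mul_one]
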